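/- arXiv:2009.11688 — 4 statements merged into one kernel-verified Lean document; each statement's English description precedes it below -/
import Mathlib

section
/- For H ∈ (0,1), θ > 0, σ ∈ ℝ and t ≥ s ≥ 0 define R_H(t,s) = (Hσ²/2) [ −e^{(s−t)/θ} ∫₀^{t−s} e^{z/θ} z^{2H−1} dz + e^{(t−s)/θ} ∫_{t−s}^{t} e^{−z/θ} z^{2H−1} dz − e^{−(t+s)/θ} ∫_{s}^{t} e^{z/θ} z^{2H−1} dz + e^{(s−t)/θ} ∫₀^{s} e^{−z/θ} z^{2H−1} dz + 2 e^{−(t+s)/θ} ∫₀^{t} e^{z/θ} z^{2H−1} dz ], extended to all t,s ≥ 0 by symmetry R_H(t,s) = R_H(s,t). Then the map (H, t, s) ↦ R_H(t,s) is continuous on (0,1) × [0,∞) × [0,∞). -/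
open MeasureTheory Real Set

/-- The Wiener-integral form of the fOU covariance, for `t ≥ s`. -/
noncomputable def RHaux (θ σ H t s : ℝ) : ℝ :=
  (H * σ^2 / 2) *
    (-(Real.exp ((s-t)/θ)) * (∫ z in (0:ℝ)..(t-s), Real.exp (z/θ) * z ^ (2*H-1))
      + Real.exp ((t-s)/θ) * (∫ z in (t-s)..t, Real.exp (-z/θ) * z ^ (2*H-1))
      - Real.exp (-(t+s)/θ) * (∫ z in s..t, Real.exp (z/θ) * z ^ (2*H-1))
      + Real.exp ((s-t)/θ) * (∫ z in (0:ℝ)..s, Real.exp (-z/θ) * z ^ (2*H-1))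
      + 2 * Real.exp (-(t+s)/θ) * (∫ z in (0:ℝ)..t, Real.exp (z/θ) * z ^ (2*H-1)))

/-- The covariance function of the fOU process, extended to all `t, s ≥ 0` by symmetry. -/
noncomputable def RH (θ σ H t s : ℝ) : ℝ :=
  if s ≤ t then RHaux θ σ H t s else RHaux θ σ H s t

/-- The primitive `x ↦ ∫_{(0,x]} e^{z/c} z^{2H-1} dz`. -/
noncomputable def fouG (c H x : ℝ) : ℝ :=
  ∫ z in Set.Ioc (0:ℝ) x, Real.exp (z / c) * z ^ (2 * H - 1)

lemma fou_intervalIntegrable (c H a b : ℝ) (hH : 0 < H) :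
    IntervalIntegrable (fun z => Real.exp (z / c) * z ^ (2 * H - 1)) volume a b :=
  (intervalIntegral.intervalIntegrable_rpow' (by linarith)).continuousOn_mul
    ((Real.continuous_exp.comp (continuous_id.div_const c)).continuousOn)

lemma fouG_contAt (c : ℝ) {H₀ : ℝ} (x₀ : ℝ) (h0 : 0 < H₀) (h1 : H₀ < 1) :
    ContinuousAt (fun p : ℝ × ℝ => fouG c p.1 p.2) (H₀, x₀) := by
  set M : ℝ := |x₀| + 1 with hMdef
  have hM0 : (0:ℝ) < M := by positivity
  have hx₀M : x₀ < M := lt_of_le_of_lt (le_abs_self x₀) (lt_add_one _)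
  set H₁ : ℝ := H₀ / 2 with hH1def
  set H₂ : ℝ := (H₀ + 1) / 2 with hH2def
  have hH₁0 : 0 < H₁ := by positivity
  have hH₁H : H₁ < H₀ := by rw [hH1def]; linarith
  have hHH₂ : H₀ < H₂ := by rw [hH2def]; linarith
  have hH₂1 : H₂ < 1 := by rw [hH2def]; linarith
  set B : ℝ := Real.exp (M * |1 / c|) with hBdef
  set μ : Measure ℝ := volume.restrict (Set.Ioc 0 M) with hμdef
  set f : ℝ → ℝ → ℝ := fun H z => Real.exp (z / c) * z ^ (2 * H - 1) with hfdef
  have key : ContinuousAt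
      (fun p : ℝ × ℝ => ∫ z, (Set.Ioc (0:ℝ) p.2).indicator (f p.1) z ∂μ) (H₀, x₀) := by
    apply continuousAt_of_dominated (bound := fun z => B * (z ^ (2*H₁-1) + z ^ (2*H₂-1)))
    · filter_upwards with p
      exact ((show Measurable (f p.1) by rw [hfdef]; fun_prop)
        ).aestronglyMeasurable.indicator measurableSet_Ioc
    · have hnb : ∀ᶠ p : ℝ × ℝ in nhds (H₀, x₀), p.1 ∈ Set.Ioo H₁ H₂ :=
        continuousAt_fst.preimage_mem_nhds (Ioo_mem_nhds hH₁H hHH₂)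
      filter_upwards [hnb] with p hp
      refine (ae_restrict_iff' measurableSet_Ioc).2 (Filter.Eventually.of_forall fun z hz => ?_)
      calc ‖(Set.Ioc (0:ℝ) p.2).indicator (f p.1) z‖ ≤ ‖f p.1 z‖ :=
            norm_indicator_le_norm_self _ _
        _ = Real.exp (z / c) * z ^ (2 * p.1 - 1) := by
            rw [hfdef]
            exact Real.norm_of_nonneg (mul_nonneg (Real.exp_pos _).le
              (Real.rpow_nonneg hz.1.le _))
        _ ≤ B * (z ^ (2*H₁-1) + z ^ (2*H₂-1)) := by
            refine mul_le_mul ?_ ?_ (Real.rpow_nonneg hz.1.le _) (Real.exp_pos _).le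
            · refine Real.exp_le_exp.2 ?_
              calc z / c = z * (1/c) := by ring
                _ ≤ |z * (1/c)| := le_abs_self _
                _ = |z| * |1/c| := abs_mul _ _
                _ ≤ M * |1/c| := by
                    refine mul_le_mul_of_nonneg_right ?_ (abs_nonneg _)
                    rw [abs_of_pos hz.1]; exact hz.2
            · rcases le_total z 1 with hz1 | hz1
              · refine le_add_of_le_of_nonneg ?_ (Real.rpow_nonneg hz.1.le _)
                exact Real.rpow_le_rpow_of_exponent_ge hz.1 hz1 (by linarith [hp.1])
              · refine le_add_of_nonneg_of_le (Real.rpow_nonneg hz.1.le _) ?_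
                exact Real.rpow_le_rpow_of_exponent_le hz1 (by linarith [hp.2])
    · have i1 : IntegrableOn (fun z : ℝ => z ^ (2*H₁-1)) (Set.Ioc 0 M) volume := by
        have := intervalIntegral.intervalIntegrable_rpow' (a := 0) (b := M)
          (show (-1:ℝ) < 2*H₁-1 by linarith)
        rwa [intervalIntegrable_iff_integrableOn_Ioc_of_le hM0.le] at this
      have i2 : IntegrableOn (fun z : ℝ => z ^ (2*H₂-1)) (Set.Ioc 0 M) volume := by
        have := intervalIntegral.intervalIntegrable_rpow' (a := 0) (b := M)
          (show (-1:ℝ) < 2*H₂-1 by linarith)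
        rwa [intervalIntegrable_iff_integrableOn_Ioc_of_le hM0.le] at this
      exact (i1.add i2).const_mul B
    · have hsing : μ {x₀} = 0 := by
        rw [hμdef, Measure.restrict_apply (measurableSet_singleton x₀)]
        exact measure_mono_null Set.inter_subset_left (measure_singleton x₀)
      have h2 : ∀ᵐ z ∂μ, z ≠ x₀ := by
        rw [MeasureTheory.ae_iff]
        convert hsing using 2
        ext z; simp
      filter_upwards [h2, ae_restrict_mem measurableSet_Ioc] with z hne hz
      rcases lt_or_gt_of_ne hne with hlt | hgt
      · have hev : ∀ᶠ p : ℝ × ℝ in nhds (H₀, x₀), z < p.2 :=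
          continuousAt_snd.preimage_mem_nhds (Ioi_mem_nhds hlt)
        have hcont : ContinuousAt (fun p : ℝ × ℝ => f p.1 z) (H₀, x₀) := by
          refine continuousAt_const.mul ?_
          have h := Real.continuousAt_rpow (z, 2*H₀-1) (Or.inl (ne_of_gt hz.1))
          exact h.comp (x := (H₀, x₀)) (f := fun p : ℝ × ℝ => ((z, 2*p.1-1) : ℝ × ℝ))
            ((continuous_const.prodMk ((continuous_const.mul continuous_fst).sub
              continuous_const)).continuousAt)
        refine hcont.congr ?_
        filter_upwards [hev] with p hp
        exact (Set.indicator_of_mem (show z ∈ Set.Ioc (0:ℝ) p.2 from ⟨hz.1, hp.le⟩) (f p.1)).symm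
      · have hev : ∀ᶠ p : ℝ × ℝ in nhds (H₀, x₀), p.2 < z :=
          continuousAt_snd.preimage_mem_nhds (Iio_mem_nhds hgt)
        refine (continuousAt_const (y := (0:ℝ))).congr ?_
        filter_upwards [hev] with p hp
        exact (Set.indicator_of_notMem (fun hmem : z ∈ Set.Ioc (0:ℝ) p.2 => absurd hmem.2 (not_le.2 hp)) (f p.1)).symm
  refine key.congr ?_
  have hev : ∀ᶠ p : ℝ × ℝ in nhds (H₀, x₀), p.2 < M :=
    continuousAt_snd.preimage_mem_nhds (Iio_mem_nhds hx₀M)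
  filter_upwards [hev] with p hp
  rw [fouG, hμdef, MeasureTheory.integral_indicator measurableSet_Ioc,
    Measure.restrict_restrict measurableSet_Ioc, Set.Ioc_inter_Ioc, max_self,
    min_eq_left hp.le]

/-- `RHaux` rewritten in terms of `fouG`. -/
noncomputable def fouF (θ σ H t s : ℝ) : ℝ :=
  (H * σ^2 / 2) *
    (-(Real.exp ((s-t)/θ)) * fouG θ H (t-s)
      + Real.exp ((t-s)/θ) * (fouG (-θ) H t - fouG (-θ) H (t-s))
      - Real.exp (-(t+s)/θ) * (fouG θ H t - fouG θ H s)
      + Real.exp ((s-t)/θ) * fouG (-θ) H s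
      + 2 * Real.exp (-(t+s)/θ) * fouG θ H t)

lemma RHaux_eq_fouF (θ σ H t s : ℝ) (hH : 0 < H) (hs : 0 ≤ s) (hst : s ≤ t) :
    RHaux θ σ H t s = fouF θ σ H t s := by
  have ht : 0 ≤ t := hs.trans hst
  have hts : 0 ≤ t - s := sub_nonneg.2 hst
  have hneg : ∀ z : ℝ, -z / θ = z / (-θ) := fun z => by rw [div_neg, neg_div]
  have A : ∀ x : ℝ, 0 ≤ x →
      (∫ z in (0:ℝ)..x, Real.exp (z/θ) * z ^ (2*H-1)) = fouG θ H x := fun x hx => by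
    rw [fouG, intervalIntegral.integral_of_le hx]
  have A' : ∀ x : ℝ, 0 ≤ x →
      (∫ z in (0:ℝ)..x, Real.exp (-z/θ) * z ^ (2*H-1)) = fouG (-θ) H x := fun x hx => by
    rw [fouG, ← intervalIntegral.integral_of_le hx]
    exact intervalIntegral.integral_congr fun z _ => by rw [hneg]
  have B : (∫ z in (t-s)..t, Real.exp (-z/θ) * z ^ (2*H-1))
      = fouG (-θ) H t - fouG (-θ) H (t-s) := by
    rw [← A' t ht, ← A' (t-s) hts]
    have h1 : IntervalIntegrable (fun z => Real.exp (-z/θ) * z ^ (2*H-1)) volume 0 t := by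
      have := fou_intervalIntegrable (-θ) H 0 t hH
      exact this.congr (fun z _ => by simp only [hneg])
    have h2 : IntervalIntegrable (fun z => Real.exp (-z/θ) * z ^ (2*H-1)) volume 0 (t-s) := by
      have := fou_intervalIntegrable (-θ) H 0 (t-s) hH
      exact this.congr (fun z _ => by simp only [hneg])
    exact (intervalIntegral.integral_interval_sub_left h1 h2).symm
  have C : (∫ z in s..t, Real.exp (z/θ) * z ^ (2*H-1)) = fouG θ H t - fouG θ H s := by
    rw [← A t ht, ← A s hs]
    exact (intervalIntegral.integral_interval_sub_left
      (fou_intervalIntegrable θ H 0 t hH) (fou_intervalIntegrable θ H 0 s hH)).symm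
  rw [RHaux, fouF, A (t-s) hts, A t ht, A' s hs, B, C]

lemma fouF_contAt (θ σ : ℝ) {p : ℝ × ℝ × ℝ} (hH : p.1 ∈ Set.Ioo (0:ℝ) 1) :
    ContinuousAt (fun q : ℝ × ℝ × ℝ => fouF θ σ q.1 q.2.1 q.2.2) p := by
  obtain ⟨h0, h1⟩ := hH
  have hg : ∀ (c : ℝ) (e : ℝ × ℝ × ℝ → ℝ), Continuous e →
      ContinuousAt (fun q : ℝ × ℝ × ℝ => fouG c q.1 (e q)) p := fun c e he =>
    ContinuousAt.comp (f := fun q : ℝ × ℝ × ℝ => ((q.1, e q) : ℝ × ℝ))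
      (fouG_contAt c (e p) h0 h1) ((continuous_fst.prodMk he).continuousAt)
  have c1 : Continuous fun q : ℝ × ℝ × ℝ => q.2.1 := continuous_fst.comp continuous_snd
  have c2 : Continuous fun q : ℝ × ℝ × ℝ => q.2.2 := continuous_snd.comp continuous_snd
  have hexp : ∀ e : ℝ × ℝ × ℝ → ℝ, Continuous e →
      ContinuousAt (fun q => Real.exp (e q / θ)) p := fun e he =>
    (Real.continuous_exp.comp (he.div_const θ)).continuousAt
  unfold fouF
  refine ContinuousAt.mul (by fun_prop) ?_
  refine ((((?_ : ContinuousAt _ p).add ?_).sub ?_).add ?_).add ?_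
  · exact ((hexp _ (c2.sub c1)).neg).mul (hg θ _ (c1.sub c2))
  · exact (hexp _ (c1.sub c2)).mul ((hg (-θ) _ c1).sub (hg (-θ) _ (c1.sub c2)))
  · exact (hexp _ ((c1.add c2).neg)).mul ((hg θ _ c1).sub (hg θ _ c2))
  · exact (hexp _ (c2.sub c1)).mul (hg (-θ) _ c2)
  · exact (continuousAt_const.mul (hexp _ ((c1.add c2).neg))).mul (hg θ _ c1)

/-- `(H,t,s) ↦ R_H(t,s)` is continuous on `(0,1) × [0,∞) × [0,∞)`. -/
theorem RH_continuousOn (θ σ : ℝ) (hθ : 0 < θ) :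
    ContinuousOn (fun p : ℝ × ℝ × ℝ => RH θ σ p.1 p.2.1 p.2.2)
      (Set.Ioo (0:ℝ) 1 ×ˢ Set.Ici (0:ℝ) ×ˢ Set.Ici (0:ℝ)) := by
  have hm : Continuous fun p : ℝ × ℝ × ℝ =>
      ((p.1, max p.2.1 p.2.2, min p.2.1 p.2.2) : ℝ × ℝ × ℝ) :=
    continuous_fst.prodMk (((continuous_fst.comp continuous_snd).max
      (continuous_snd.comp continuous_snd)).prodMk
      ((continuous_fst.comp continuous_snd).min (continuous_snd.comp continuous_snd)))
  refine ContinuousOn.congr (f := fun p : ℝ × ℝ × ℝ =>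
      fouF θ σ p.1 (max p.2.1 p.2.2) (min p.2.1 p.2.2)) ?_ ?_
  · intro p hp
    have := ContinuousAt.comp
      (f := fun p : ℝ × ℝ × ℝ => ((p.1, max p.2.1 p.2.2, min p.2.1 p.2.2) : ℝ × ℝ × ℝ))
      (fouF_contAt θ σ (p := (p.1, max p.2.1 p.2.2, min p.2.1 p.2.2)) hp.1)
      (hm.continuousAt (x := p))
    exact this.continuousWithinAt
  · intro p hp
    obtain ⟨hH, ht, hs⟩ := hp
    by_cases h : p.2.2 ≤ p.2.1
    · simp only [RH, if_pos h, max_eq_left h, min_eq_right h]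
      exact RHaux_eq_fouF θ σ p.1 p.2.1 p.2.2 hH.1 hs h
    · push_neg at h
      simp only [RH, if_neg (not_le.mpr h), max_eq_right h.le, min_eq_left h.le]
      exact RHaux_eq_fouF θ σ p.1 p.2.2 p.2.1 hH.1 ht h.le
end

section
/- For H ∈ (0,1), θ > 0, σ ∈ ℝ and t ≥ s ≥ 0 define R_H(t,s) = (Hσ²/2) [ −e^{(s−t)/θ} ∫₀^{t−s} e^{z/θ} z^{2H−1} dz + e^{(t−s)/θ} ∫_{t−s}^{t} e^{−z/θ} z^{2H−1} dz − e^{−(t+s)/θ} ∫_{s}^{t} e^{z/θ} z^{2H−1} dz + e^{(s−t)/θ} ∫₀^{s} e^{−z/θ} z^{2H−1} dz + 2 e^{−(t+s)/θ} ∫₀^{t} e^{z/θ} z^{2H−1} dz ], extended to all t,s ≥ 0 by symmetry R_H(t,s) = R_H(s,t). Then for every (t,s) ∈ [0,∞)², lim_{H → 1⁻} R_H(t,s) = σ²θ² (1 − e^{−s/θ})(1 − e^{−t/θ}). -/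
open MeasureTheory Real Set

open Filter in
lemma ev_half : ∀ᶠ H : ℝ in nhdsWithin 1 (Set.Iio 1), H ∈ Set.Ioo (1/2 : ℝ) 1 := by
  filter_upwards [eventually_nhdsWithin_of_eventually_nhds
    (eventually_gt_nhds (by norm_num : (1/2 : ℝ) < 1)), self_mem_nhdsWithin] with H h1 h2
  exact ⟨h1, h2⟩

open Filter in
lemma tendsto_int_aux (g : ℝ → ℝ) (hg : Continuous g) (b d : ℝ) (hb : 0 ≤ b) (hbd : b ≤ d) :
    Tendsto (fun H : ℝ => ∫ z in b..d, g z * z ^ (2*H-1)) (nhdsWithin 1 (Set.Iio 1))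
      (nhds (∫ z in b..d, g z * z)) := by
  apply intervalIntegral.tendsto_integral_filter_of_dominated_convergence
    (fun z => |g z| * (1 + d^2))
  · filter_upwards [ev_half] with H hH
    have : (0:ℝ) ≤ 2*H-1 := by linarith [hH.1]
    exact (hg.mul (Real.continuous_rpow_const this)).aestronglyMeasurable
  · filter_upwards [ev_half] with H hH
    have hp0 : (0:ℝ) ≤ 2*H-1 := by linarith [hH.1]
    have hp2 : 2*H-1 ≤ (2:ℝ) := by linarith [hH.2]
    rw [Set.uIoc_of_le hbd]
    filter_upwards with z hz
    have hz0 : 0 < z := lt_of_le_of_lt hb hz.1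
    have hzd : z ≤ d := hz.2
    have hpow : z ^ (2*H-1) ≤ 1 + d^2 := by
      rcases le_or_gt z 1 with h1 | h1
      · have := Real.rpow_le_one hz0.le h1 hp0
        nlinarith [sq_nonneg d]
      · have h2 : z ^ (2*H-1) ≤ z ^ (2:ℝ) :=
          Real.rpow_le_rpow_of_exponent_le h1.le hp2
        rw [Real.rpow_two] at h2
        nlinarith
    have habs : |g z * z ^ (2*H-1)| = |g z| * z ^ (2*H-1) := by
      rw [abs_mul, abs_of_nonneg (Real.rpow_nonneg hz0.le _)]
    calc ‖g z * z ^ (2*H-1)‖ = |g z| * z ^ (2*H-1) := habs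
      _ ≤ |g z| * (1 + d^2) := by
          exact mul_le_mul_of_nonneg_left hpow (abs_nonneg _)
  · exact ((hg.abs.mul continuous_const).intervalIntegrable b d)
  · rw [Set.uIoc_of_le hbd]
    filter_upwards with z hz
    have hz0 : 0 < z := lt_of_le_of_lt hb hz.1
    have h1 : Tendsto (fun H : ℝ => z ^ (2*H-1)) (nhdsWithin 1 (Set.Iio 1)) (nhds z) := by
      have : Tendsto (fun H : ℝ => 2*H-1) (nhdsWithin 1 (Set.Iio 1)) (nhds 1) := by
        have : Tendsto (fun H : ℝ => 2*H-1) (nhds 1) (nhds (2*1-1)) := by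
          exact ((continuous_const.mul continuous_id).sub continuous_const).tendsto 1
        have h2 := this.mono_left (nhdsWithin_le_nhds (s := Set.Iio 1))
        norm_num at h2
        exact h2
      have hc : ContinuousAt (fun p : ℝ => z ^ p) 1 := by
        simp only [Real.rpow_def_of_pos hz0]
        exact (Real.continuous_exp.comp (continuous_const.mul continuous_id)).continuousAt
      have := hc.tendsto.comp this
      simpa [Function.comp_def, Real.rpow_one] using this
    exact (tendsto_const_nhds.mul h1)

lemma intA (θ : ℝ) (hθ : θ ≠ 0) (a b : ℝ) :
    ∫ z in a..b, Real.exp (z/θ) * z =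
      (θ*Real.exp (b/θ)*(b-θ)) - (θ*Real.exp (a/θ)*(a-θ)) := by
  have key : ∀ z : ℝ, HasDerivAt (fun z => θ*Real.exp (z/θ)*(z-θ)) (Real.exp (z/θ) * z) z := by
    intro z
    have h1 : HasDerivAt (fun z : ℝ => Real.exp (z/θ)) (Real.exp (z/θ) * (1/θ)) z := by
      simpa [Function.comp_def] using (Real.hasDerivAt_exp (z/θ)).comp z ((hasDerivAt_id z).div_const θ)
    have h2 := ((h1.const_mul θ).mul ((hasDerivAt_id z).sub_const θ))
    replace h2 : HasDerivAt (fun z => θ*Real.exp (z/θ)*(z-θ)) _ z := h2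
    convert h2 using 1
    simp only [id, Pi.neg_apply]
    field_simp
    ring
  rw [intervalIntegral.integral_eq_sub_of_hasDerivAt (fun z _ => key z)]
  exact ((Real.continuous_exp.comp (continuous_id.div_const θ)).mul continuous_id).intervalIntegrable a b

lemma intB (θ : ℝ) (hθ : θ ≠ 0) (a b : ℝ) :
    ∫ z in a..b, Real.exp (-z/θ) * z =
      (-(θ*Real.exp (-b/θ))*(b+θ)) - (-(θ*Real.exp (-a/θ))*(a+θ)) := by
  have key : ∀ z : ℝ, HasDerivAt (fun z => -(θ*Real.exp (-z/θ))*(z+θ)) (Real.exp (-z/θ) * z) z := by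
    intro z
    have h1 : HasDerivAt (fun z : ℝ => Real.exp (-z/θ)) (Real.exp (-z/θ) * (-1/θ)) z := by
      simpa [Function.comp_def] using (Real.hasDerivAt_exp (-z/θ)).comp z (((hasDerivAt_id z).neg).div_const θ)
    have h2 := (((h1.const_mul θ).neg).mul ((hasDerivAt_id z).add_const θ))
    replace h2 : HasDerivAt (fun z => -(θ*Real.exp (-z/θ))*(z+θ)) _ z := h2
    convert h2 using 1
    simp only [id, Pi.neg_apply]
    field_simp
    ring
  rw [intervalIntegral.integral_eq_sub_of_hasDerivAt (fun z _ => key z)]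
  exact ((Real.continuous_exp.comp (continuous_id.neg.div_const θ)).mul continuous_id).intervalIntegrable a b

open Filter in
lemma RHaux_tendsto (θ σ : ℝ) (hθ : 0 < θ) (t s : ℝ) (hs : 0 ≤ s) (hst : s ≤ t) :
    Tendsto (fun H => RHaux θ σ H t s) (nhdsWithin 1 (Set.Iio 1))
      (nhds (σ^2 * θ^2 * (1 - Real.exp (-s/θ)) * (1 - Real.exp (-t/θ)))) := by
  have ht : 0 ≤ t := hs.trans hst
  have hts : 0 ≤ t - s := sub_nonneg.2 hst
  have hgp : Continuous fun z : ℝ => Real.exp (z/θ) :=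
    Real.continuous_exp.comp (continuous_id.div_const θ)
  have hgm : Continuous fun z : ℝ => Real.exp (-z/θ) :=
    Real.continuous_exp.comp (continuous_id.neg.div_const θ)
  have h1 := tendsto_int_aux _ hgp 0 (t-s) le_rfl hts
  have h2 := tendsto_int_aux _ hgm (t-s) t hts (by linarith)
  have h3 := tendsto_int_aux _ hgp s t hs hst
  have h4 := tendsto_int_aux _ hgm 0 s le_rfl hs
  have h5 := tendsto_int_aux _ hgp 0 t le_rfl ht
  have hid : Tendsto (fun H : ℝ => H) (nhdsWithin 1 (Set.Iio 1)) (nhds 1) :=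
    tendsto_id.mono_right nhdsWithin_le_nhds
  have key : Tendsto (fun H => RHaux θ σ H t s) (nhdsWithin 1 (Set.Iio 1))
      (nhds ((1 * σ^2 / 2) *
        (-(Real.exp ((s-t)/θ)) * (∫ z in (0:ℝ)..(t-s), Real.exp (z/θ) * z)
          + Real.exp ((t-s)/θ) * (∫ z in (t-s)..t, Real.exp (-z/θ) * z)
          - Real.exp (-(t+s)/θ) * (∫ z in s..t, Real.exp (z/θ) * z)
          + Real.exp ((s-t)/θ) * (∫ z in (0:ℝ)..s, Real.exp (-z/θ) * z)
          + 2 * Real.exp (-(t+s)/θ) * (∫ z in (0:ℝ)..t, Real.exp (z/θ) * z)))) := by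
    simp only [RHaux]
    exact ((hid.mul_const (σ^2)).div_const 2).mul
      (((((h1.const_mul _).add (h2.const_mul _)).sub (h3.const_mul _)).add
        (h4.const_mul _)).add (h5.const_mul _))
  convert key using 2
  rw [intA θ hθ.ne' 0 (t-s), intA θ hθ.ne' s t, intA θ hθ.ne' 0 t,
    intB θ hθ.ne' (t-s) t, intB θ hθ.ne' 0 s]
  have hP := Real.exp_ne_zero (s/θ)
  have hQ := Real.exp_ne_zero (t/θ)
  simp only [zero_div, Real.exp_zero, neg_zero, sub_div, add_div, neg_div,
    Real.exp_sub, Real.exp_add, Real.exp_neg]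
  field_simp
  ring

/-- for every `t, s ≥ 0`, `R_H(t,s) → σ²θ²(1−e^{−s/θ})(1−e^{−t/θ})` as `H → 1⁻`. -/
theorem RH_tendsto_one (θ σ : ℝ) (hθ : 0 < θ) (t s : ℝ) (ht : 0 ≤ t) (hs : 0 ≤ s) :
    Filter.Tendsto (fun H => RH θ σ H t s) (nhdsWithin 1 (Set.Iio 1))
      (nhds (σ^2 * θ^2 * (1 - Real.exp (-s/θ)) * (1 - Real.exp (-t/θ)))) := by
  rcases le_or_gt s t with h | h
  · simp only [RH, if_pos h]
    exact RHaux_tendsto θ σ hθ t s hs h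
  · simp only [RH, if_neg (not_le.2 h)]
    have := RHaux_tendsto θ σ hθ s t ht h.le
    convert this using 2
    ring
end

section
/- For H ∈ (0,1), θ > 0, σ ∈ ℝ and t ≥ s ≥ 0 define R_H(t,s) = (Hσ²/2) [ −e^{(s−t)/θ} ∫₀^{t−s} e^{z/θ} z^{2H−1} dz + e^{(t−s)/θ} ∫_{t−s}^{t} e^{−z/θ} z^{2H−1} dz − e^{−(t+s)/θ} ∫_{s}^{t} e^{z/θ} z^{2H−1} dz + e^{(s−t)/θ} ∫₀^{s} e^{−z/θ} z^{2H−1} dz + 2 e^{−(t+s)/θ} ∫₀^{t} e^{z/θ} z^{2H−1} dz ], extended to all t,s ≥ 0 by symmetry R_H(t,s) = R_H(s,t). Then for every (t,s) ∈ [0,∞)², lim_{H → 0⁺} R_H(t,s) = 0 if min(s,t) = 0; = (σ²/2) e^{−(t+s)/θ} if s ≠ t and min(s,t) > 0; and = (σ²/2)(1 + e^{−2t/θ}) if s = t > 0. -/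
open MeasureTheory Real Set

lemma myInt {c r : ℝ} (a : ℝ) (hr : -1 < r) (ha : 0 ≤ a) :
    IntervalIntegrable (fun z => Real.exp (c*z) * z ^ r) volume 0 a := by
  have hg : IntervalIntegrable (fun z => Real.exp (|c| * a) * z ^ r) volume 0 a :=
    (intervalIntegral.intervalIntegrable_rpow' hr).const_mul _
  have hm : Measurable fun z : ℝ => Real.exp (c*z) * z ^ r :=
    (Real.measurable_exp.comp (measurable_const.mul measurable_id)).mul (by measurability)
  refine hg.mono_fun hm.aestronglyMeasurable ?_
  have : ∀ᵐ z ∂(volume.restrict (Set.uIoc (0:ℝ) a)),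
      ‖Real.exp (c*z) * z ^ r‖ ≤ ‖Real.exp (|c| * a) * z ^ r‖ := by
    rw [ae_restrict_iff' measurableSet_uIoc]
    refine Filter.Eventually.of_forall fun z hz => ?_
    rw [uIoc_of_le ha] at hz
    have hz0 : 0 < z := hz.1
    have hza : z ≤ a := hz.2
    have h1 : c * z ≤ |c| * a :=
      le_trans (mul_le_mul_of_nonneg_right (le_abs_self c) hz0.le)
        (mul_le_mul_of_nonneg_left hza (abs_nonneg c))
    have hrp : (0:ℝ) ≤ z ^ r := Real.rpow_nonneg hz0.le r
    simp only [Real.norm_eq_abs, abs_mul, abs_of_nonneg hrp, Real.abs_exp]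
    exact mul_le_mul_of_nonneg_right (Real.exp_le_exp.2 h1) hrp
  exact this

lemma exp_sub_one_bound {x M : ℝ} (hx : |x| ≤ M) : |Real.exp x - 1| ≤ |x| * Real.exp M := by
  have hM : 0 ≤ M := le_trans (abs_nonneg x) hx
  rcases le_or_gt 0 x with h | h
  · have h1 : Real.exp x - 1 ≤ x * Real.exp x := by
      have h2 := Real.add_one_le_exp (-x)
      have key : Real.exp (-x) * Real.exp x = 1 := by rw [← Real.exp_add]; simp
      nlinarith [Real.exp_pos x]
    have h0 : 0 ≤ Real.exp x - 1 := by
      have := Real.add_one_le_exp x; linarith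
    rw [abs_of_nonneg h0, abs_of_nonneg h]
    refine h1.trans (mul_le_mul_of_nonneg_left (Real.exp_le_exp.2 ?_) h)
    rw [abs_of_nonneg h] at hx; linarith
  · have h0 : Real.exp x - 1 ≤ 0 := by
      have : Real.exp x ≤ 1 := Real.exp_le_one_iff.2 h.le
      linarith
    rw [abs_of_nonpos h0, abs_of_neg h]
    have h2 : 1 - Real.exp x ≤ -x := by
      have := Real.add_one_le_exp x; linarith
    nlinarith [Real.one_le_exp hM]

lemma tendsto_K (c : ℝ) {a b : ℝ} (ha : 0 < a) (hab : a ≤ b) :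
    Filter.Tendsto (fun H : ℝ => H * ∫ z in a..b, Real.exp (c*z) * z ^ (2*H-1))
      (nhdsWithin 0 (Set.Ioi 0)) (nhds 0) := by
  set C : ℝ := Real.exp (|c| * b) * max a⁻¹ 1 with hCdef
  have hC : 0 ≤ C := mul_nonneg (Real.exp_pos _).le (le_trans zero_le_one (le_max_right _ _))
  have hg : Filter.Tendsto (fun H : ℝ => H * (C * |b - a|)) (nhdsWithin 0 (Set.Ioi 0)) (nhds 0) := by
    have h0 : Filter.Tendsto (fun H : ℝ => H * (C * |b - a|)) (nhds 0) (nhds (0 * (C * |b-a|))) :=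
      (continuous_id.mul continuous_const).tendsto 0
    rw [zero_mul] at h0
    exact h0.mono_left nhdsWithin_le_nhds
  refine squeeze_zero_norm' ?_ hg
  filter_upwards [Ioo_mem_nhdsGT_of_mem (by norm_num : (0:ℝ) ∈ Set.Ico (0:ℝ) (1/2))] with H hH
  have hH0 : 0 < H := hH.1
  have hH2 : 2*H - 1 ≤ 0 := by linarith [hH.2]
  have hbound : ∀ z ∈ Set.uIoc a b, ‖Real.exp (c*z) * z ^ (2*H-1)‖ ≤ C := by
    intro z hz
    rw [Set.uIoc_of_le hab] at hz
    have hz0 : 0 < z := lt_of_lt_of_le ha hz.1.le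
    have h1 : Real.exp (c*z) ≤ Real.exp (|c| * b) := by
      refine Real.exp_le_exp.2 (le_trans (mul_le_mul_of_nonneg_right (le_abs_self c) hz0.le)
        (mul_le_mul_of_nonneg_left (hz.2) (abs_nonneg c)))
    have h2 : z ^ (2*H-1) ≤ a ^ (2*H-1) :=
      Real.antitoneOn_rpow_Ioi_of_exponent_nonpos hH2 ha (lt_of_lt_of_le ha hz.1.le) hz.1.le
    have h3 : a ^ (2*H-1) ≤ max a⁻¹ 1 := by
      rcases le_or_gt a 1 with h | h
      · refine le_trans ?_ (le_max_left _ _)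
        have := Real.rpow_le_rpow_of_exponent_ge ha h (by linarith [hH.2] : (-1:ℝ) ≤ 2*H-1)
        rwa [Real.rpow_neg_one] at this
      · exact le_trans (Real.rpow_le_one_of_one_le_of_nonpos h.le hH2) (le_max_right _ _)
    have hrp : (0:ℝ) ≤ z ^ (2*H-1) := Real.rpow_nonneg hz0.le _
    rw [Real.norm_eq_abs, abs_mul, Real.abs_exp, abs_of_nonneg hrp]
    exact mul_le_mul h1 (h2.trans h3) hrp (Real.exp_pos _).le
  have := intervalIntegral.norm_integral_le_of_norm_le_const hbound
  rw [norm_mul, Real.norm_eq_abs (H), abs_of_pos hH0]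
  exact mul_le_mul_of_nonneg_left this hH0.le

lemma tendsto_J (c : ℝ) {a : ℝ} (ha : 0 < a) :
    Filter.Tendsto (fun H : ℝ => H * ∫ z in (0:ℝ)..a, Real.exp (c*z) * z ^ (2*H-1))
      (nhdsWithin 0 (Set.Ioi 0)) (nhds (1/2)) := by
  set L : ℝ := |c| * Real.exp (|c| * a) with hLdef
  have hL : 0 ≤ L := mul_nonneg (abs_nonneg c) (Real.exp_pos _).le
  -- the error term
  set E : ℝ → ℝ := fun H => H * ∫ z in (0:ℝ)..a, (Real.exp (c*z) - 1) * z ^ (2*H-1) with hEdef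
  have hmain : Filter.Tendsto (fun H : ℝ => a ^ (2*H) / 2) (nhdsWithin 0 (Set.Ioi 0)) (nhds (1/2)) := by
    have h1 : ContinuousAt (fun H : ℝ => a ^ (2*H) / 2) 0 := by
      refine ContinuousAt.div_const ?_ _
      exact (Real.continuousAt_const_rpow ha.ne').comp (by fun_prop)
    have := h1.tendsto.mono_left
      (nhdsWithin_le_nhds : nhdsWithin (0:ℝ) (Set.Ioi 0) ≤ nhds 0)
    simpa using this
  have hE : Filter.Tendsto E (nhdsWithin 0 (Set.Ioi 0)) (nhds 0) := by
    have hg : Filter.Tendsto (fun H : ℝ => H * (L * (a ^ (2*H+1) / (2*H+1))))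
        (nhdsWithin 0 (Set.Ioi 0)) (nhds 0) := by
      have h1 : ContinuousAt (fun H : ℝ => H * (L * (a ^ (2*H+1) / (2*H+1)))) 0 := by
        refine continuousAt_id.mul (ContinuousAt.mul continuousAt_const (ContinuousAt.div ?_ (by fun_prop) (by norm_num)))
        exact (Real.continuousAt_const_rpow ha.ne').comp (by fun_prop)
      have := h1.tendsto.mono_left
        (nhdsWithin_le_nhds : nhdsWithin (0:ℝ) (Set.Ioi 0) ≤ nhds 0)
      simpa using this
    refine squeeze_zero_norm' ?_ hg
    filter_upwards [self_mem_nhdsWithin] with H hH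
    have hH0 : 0 < H := hH
    have hr : (-1:ℝ) < 2*H-1 := by linarith
    have hint1 : IntervalIntegrable (fun z : ℝ => z ^ (2*H-1)) volume 0 a :=
      intervalIntegral.intervalIntegrable_rpow' hr
    have hint2 : IntervalIntegrable (fun z : ℝ => (Real.exp (c*z) - 1) * z ^ (2*H-1)) volume 0 a := by
      have := (myInt (c := c) a hr ha.le).sub (hint1.const_mul 1)
      simpa [sub_mul] using this
    have hint3 : IntervalIntegrable (fun z : ℝ => L * z ^ (2*H)) volume 0 a :=
      (intervalIntegral.intervalIntegrable_rpow' (by linarith : (-1:ℝ) < 2*H)).const_mul _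
    have step1 : |∫ z in (0:ℝ)..a, (Real.exp (c*z) - 1) * z ^ (2*H-1)|
        ≤ ∫ z in (0:ℝ)..a, |(Real.exp (c*z) - 1) * z ^ (2*H-1)| :=
      intervalIntegral.abs_integral_le_integral_abs ha.le
    have step2 : (∫ z in (0:ℝ)..a, |(Real.exp (c*z) - 1) * z ^ (2*H-1)|)
        ≤ ∫ z in (0:ℝ)..a, L * z ^ (2*H) := by
      refine intervalIntegral.integral_mono_on ha.le hint2.abs hint3 fun z hz => ?_
      rcases eq_or_lt_of_le hz.1 with h | h
      · rw [← h]
        simp only [mul_zero, Real.exp_zero, sub_self, zero_mul, abs_zero]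
        positivity
      · have hrp : (0:ℝ) ≤ z ^ (2*H-1) := Real.rpow_nonneg h.le _
        rw [abs_mul, abs_of_nonneg hrp]
        have hb : |Real.exp (c*z) - 1| ≤ |c*z| * Real.exp (|c| * a) := by
          refine exp_sub_one_bound ?_
          rw [abs_mul]
          exact mul_le_mul_of_nonneg_left (by rw [abs_of_pos h]; exact hz.2) (abs_nonneg c)
        refine le_trans (mul_le_mul_of_nonneg_right hb hrp) (le_of_eq ?_)
        rw [abs_mul, abs_of_pos h]
        have hzz : z * z ^ (2*H-1) = z ^ (2*H) := by
          nth_rewrite 1 [← Real.rpow_one z]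
          rw [← Real.rpow_add h]
          norm_num
        rw [hLdef, show |c| * z * Real.exp (|c| * a) * z ^ (2*H-1)
            = |c| * Real.exp (|c| * a) * (z * z ^ (2*H-1)) by ring, hzz]
    have step3 : (∫ z in (0:ℝ)..a, L * z ^ (2*H)) = L * (a ^ (2*H+1) / (2*H+1)) := by
      rw [intervalIntegral.integral_const_mul, integral_rpow (Or.inl (by linarith))]
      rw [Real.zero_rpow (ne_of_gt (by linarith) : (2:ℝ)*H+1 ≠ 0)]
      ring
    rw [Real.norm_eq_abs, hEdef]
    simp only [abs_mul, abs_of_pos hH0]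
    refine mul_le_mul_of_nonneg_left ?_ hH0.le
    calc |∫ z in (0:ℝ)..a, (Real.exp (c*z) - 1) * z ^ (2*H-1)|
        ≤ ∫ z in (0:ℝ)..a, L * z ^ (2*H) := step1.trans step2
    _ = L * (a ^ (2*H+1) / (2*H+1)) := step3
  have key : ∀ H ∈ Set.Ioi (0:ℝ),
      H * (∫ z in (0:ℝ)..a, Real.exp (c*z) * z ^ (2*H-1)) = a ^ (2*H) / 2 + E H := by
    intro H hH
    have hH0 : 0 < H := hH
    have hr : (-1:ℝ) < 2*H-1 := by linarith
    have hint1 : IntervalIntegrable (fun z : ℝ => z ^ (2*H-1)) volume 0 a :=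
      intervalIntegral.intervalIntegrable_rpow' hr
    have hint2 : IntervalIntegrable (fun z : ℝ => (Real.exp (c*z) - 1) * z ^ (2*H-1)) volume 0 a := by
      have := (myInt (c := c) a hr ha.le).sub (hint1.const_mul 1)
      simpa [sub_mul] using this
    have hsplit : (∫ z in (0:ℝ)..a, Real.exp (c*z) * z ^ (2*H-1))
        = (∫ z in (0:ℝ)..a, z ^ (2*H-1)) + ∫ z in (0:ℝ)..a, (Real.exp (c*z) - 1) * z ^ (2*H-1) := by
      rw [← intervalIntegral.integral_add hint1 hint2]
      refine intervalIntegral.integral_congr fun z _ => ?_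
      ring
    have hval : (∫ z in (0:ℝ)..a, z ^ (2*H-1)) = a ^ (2*H) / (2*H) := by
      rw [integral_rpow (Or.inl hr)]
      rw [Real.zero_rpow (ne_of_gt (by linarith) : (2:ℝ)*H-1+1 ≠ 0)]
      ring_nf
    rw [hsplit, hval, hEdef]
    field_simp
  have hsum := hmain.add hE
  rw [add_zero] at hsum
  refine hsum.congr' ?_
  filter_upwards [self_mem_nhdsWithin] with H hH
  exact (key H hH).symm
lemma ip (θ p a b : ℝ) : (∫ z in a..b, Real.exp (z/θ) * z ^ p)
    = ∫ z in a..b, Real.exp (θ⁻¹*z) * z ^ p :=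
  intervalIntegral.integral_congr fun z _ => by rw [show z/θ = θ⁻¹*z by ring]

lemma im (θ p a b : ℝ) : (∫ z in a..b, Real.exp (-z/θ) * z ^ p)
    = ∫ z in a..b, Real.exp ((-θ⁻¹)*z) * z ^ p :=
  intervalIntegral.integral_congr fun z _ => by rw [show -z/θ = (-θ⁻¹)*z by ring]

lemma aux_case (θ σ t s : ℝ) {l1 l2 l3 l4 l5 : ℝ}
    (h1 : Filter.Tendsto (fun H : ℝ => H * ∫ z in (0:ℝ)..(t-s), Real.exp (θ⁻¹*z) * z ^ (2*H-1))
      (nhdsWithin 0 (Set.Ioi 0)) (nhds l1))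
    (h2 : Filter.Tendsto (fun H : ℝ => H * ∫ z in (t-s)..t, Real.exp ((-θ⁻¹)*z) * z ^ (2*H-1))
      (nhdsWithin 0 (Set.Ioi 0)) (nhds l2))
    (h3 : Filter.Tendsto (fun H : ℝ => H * ∫ z in s..t, Real.exp (θ⁻¹*z) * z ^ (2*H-1))
      (nhdsWithin 0 (Set.Ioi 0)) (nhds l3))
    (h4 : Filter.Tendsto (fun H : ℝ => H * ∫ z in (0:ℝ)..s, Real.exp ((-θ⁻¹)*z) * z ^ (2*H-1))
      (nhdsWithin 0 (Set.Ioi 0)) (nhds l4))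
    (h5 : Filter.Tendsto (fun H : ℝ => H * ∫ z in (0:ℝ)..t, Real.exp (θ⁻¹*z) * z ^ (2*H-1))
      (nhdsWithin 0 (Set.Ioi 0)) (nhds l5)) :
    Filter.Tendsto (fun H => RHaux θ σ H t s) (nhdsWithin 0 (Set.Ioi 0))
      (nhds (σ^2/2 * (-(Real.exp ((s-t)/θ))*l1 + Real.exp ((t-s)/θ)*l2
        - Real.exp (-(t+s)/θ)*l3 + Real.exp ((s-t)/θ)*l4 + 2*Real.exp (-(t+s)/θ)*l5))) := by
  have T := ((((h1.const_mul (-(Real.exp ((s-t)/θ)))).add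
      (h2.const_mul (Real.exp ((t-s)/θ)))).sub
      (h3.const_mul (Real.exp (-(t+s)/θ)))).add
      (h4.const_mul (Real.exp ((s-t)/θ)))).add
      (h5.const_mul (2*Real.exp (-(t+s)/θ)))
  have T2 := T.const_mul (σ^2/2)
  refine T2.congr fun H => ?_
  simp only [RHaux, ip, im]
  ring

lemma tendsto_triv (c : ℝ) {a b : ℝ} (hab : a = b) (F : Filter ℝ) :
    Filter.Tendsto (fun H : ℝ => H * ∫ z in a..b, Real.exp (c*z) * z ^ (2*H-1)) F (nhds 0) := by
  subst hab
  simp only [intervalIntegral.integral_same, mul_zero]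
  exact tendsto_const_nhds

lemma case_00 (θ σ : ℝ) :
    Filter.Tendsto (fun H => RHaux θ σ H 0 0) (nhdsWithin 0 (Set.Ioi 0)) (nhds 0) := by
  have : ∀ H : ℝ, RHaux θ σ H 0 0 = 0 := fun H => by simp [RHaux]
  simp only [this]
  exact tendsto_const_nhds

lemma case_zero (θ σ : ℝ) {t : ℝ} (ht : 0 < t) :
    Filter.Tendsto (fun H => RHaux θ σ H t 0) (nhdsWithin 0 (Set.Ioi 0)) (nhds 0) := by
  have h1 : Filter.Tendsto (fun H : ℝ => H * ∫ z in (0:ℝ)..(t-0), Real.exp (θ⁻¹*z) * z ^ (2*H-1))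
      (nhdsWithin 0 (Set.Ioi 0)) (nhds (1/2)) := by
    simp only [sub_zero]; exact tendsto_J θ⁻¹ ht
  have h2 := tendsto_triv (-θ⁻¹) (show t - (0:ℝ) = t by ring) (nhdsWithin 0 (Set.Ioi 0))
  have h3 := tendsto_J (c := θ⁻¹) ht
  have h4 := tendsto_triv (-θ⁻¹) (rfl : (0:ℝ) = 0) (nhdsWithin 0 (Set.Ioi 0))
  have h5 := tendsto_J (c := θ⁻¹) ht
  have := aux_case θ σ t 0 h1 h2 h3 h4 h5
  convert this using 2
  rw [show ((0:ℝ)-t)/θ = -(t+0)/θ by ring]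
  ring

lemma case_lt (θ σ : ℝ) {t s : ℝ} (hs : 0 < s) (hst : s < t) :
    Filter.Tendsto (fun H => RHaux θ σ H t s) (nhdsWithin 0 (Set.Ioi 0))
      (nhds (σ^2/2 * Real.exp (-(t+s)/θ))) := by
  have h1 := tendsto_J (c := θ⁻¹) (show 0 < t - s by linarith)
  have h2 := tendsto_K (-θ⁻¹) (show 0 < t - s by linarith) (show t - s ≤ t by linarith)
  have h3 := tendsto_K θ⁻¹ hs hst.le
  have h4 := tendsto_J (c := -θ⁻¹) hs
  have h5 := tendsto_J (c := θ⁻¹) (lt_trans hs hst)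
  have := aux_case θ σ t s h1 h2 h3 h4 h5
  convert this using 2
  ring

lemma case_eq (θ σ : ℝ) {t : ℝ} (ht : 0 < t) :
    Filter.Tendsto (fun H => RHaux θ σ H t t) (nhdsWithin 0 (Set.Ioi 0))
      (nhds (σ^2/2 * (1 + Real.exp (-2*t/θ)))) := by
  have h1 := tendsto_triv θ⁻¹ (show (0:ℝ) = t - t by ring) (nhdsWithin 0 (Set.Ioi 0))
  have h2 : Filter.Tendsto (fun H : ℝ => H * ∫ z in (t-t)..t, Real.exp ((-θ⁻¹)*z) * z ^ (2*H-1))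
      (nhdsWithin 0 (Set.Ioi 0)) (nhds (1/2)) := by
    simp only [sub_self]; exact tendsto_J (-θ⁻¹) ht
  have h3 := tendsto_triv θ⁻¹ (rfl : t = t) (nhdsWithin 0 (Set.Ioi 0))
  have h4 := tendsto_J (c := -θ⁻¹) ht
  have h5 := tendsto_J (c := θ⁻¹) ht
  have := aux_case θ σ t t h1 h2 h3 h4 h5
  convert this using 2
  rw [show (t-t)/θ = 0 by ring, Real.exp_zero, show -(t+t)/θ = -2*t/θ by ring]
  ring

/-- for every `t, s ≥ 0`, the limit of `R_H(t,s)` as `H → 0⁺` is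
`0` if `min s t = 0`, `(σ²/2)e^{−(t+s)/θ}` if `s ≠ t` and `min s t > 0`, and
`(σ²/2)(1+e^{−2t/θ})` if `s = t > 0`. -/
theorem RH_tendsto_zero (θ σ : ℝ) (hθ : 0 < θ) (t s : ℝ) (ht : 0 ≤ t) (hs : 0 ≤ s) :
    (min s t = 0 →
      Filter.Tendsto (fun H => RH θ σ H t s) (nhdsWithin 0 (Set.Ioi 0)) (nhds 0))
    ∧ (s ≠ t → 0 < min s t →
      Filter.Tendsto (fun H => RH θ σ H t s) (nhdsWithin 0 (Set.Ioi 0))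
        (nhds (σ^2/2 * Real.exp (-(t+s)/θ))))
    ∧ (s = t → 0 < t →
      Filter.Tendsto (fun H => RH θ σ H t s) (nhdsWithin 0 (Set.Ioi 0))
        (nhds (σ^2/2 * (1 + Real.exp (-2*t/θ))))) := by
  refine ⟨?_, ?_, ?_⟩
  · intro hmin
    rcases le_total s t with hst | hst
    · have hs0 : s = 0 := by rw [min_eq_left hst] at hmin; exact hmin
      subst hs0
      simp only [RH, if_pos hst]
      rcases eq_or_lt_of_le ht with h | h
      · rw [← h]; exact case_00 θ σ
      · exact case_zero θ σ h
    · have ht0 : t = 0 := by rw [min_eq_right hst] at hmin; exact hmin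
      subst ht0
      rcases eq_or_lt_of_le hs with h | h
      · rw [← h]
        simp only [RH, if_pos le_rfl]
        exact case_00 θ σ
      · simp only [RH, if_neg (by linarith : ¬ s ≤ (0:ℝ))]
        exact case_zero θ σ h
  · intro hne hmin
    have hs0 : 0 < s := lt_of_lt_of_le hmin (min_le_left _ _)
    have ht0 : 0 < t := lt_of_lt_of_le hmin (min_le_right _ _)
    rcases lt_or_gt_of_ne hne with h | h
    · simp only [RH, if_pos h.le]
      exact case_lt θ σ hs0 h
    · simp only [RH, if_neg (not_le.2 h)]
      have := case_lt θ σ ht0 h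
      rw [show -(s+t)/θ = -(t+s)/θ by ring] at this
      exact this
  · intro hst ht0
    subst hst
    simp only [RH, if_pos le_rfl]
    exact case_eq θ σ ht0
end

section
/- Let θ > 0, t > 0, H ∈ (0,1), and let c : [0,∞)² → ℝ be measurable and Lebesgue integrable on [0,t] × [0,s] for every s > 0. Define Φ(s) = e^{−(t+s)/θ} ∫₀ˢ ∫₀ᵗ e^{(u+v)/θ} c(u,v) du dv and g(s) = ∫₀ᵗ e^{u/θ} c(u,s) du. Assume either (𝓛1): the function v ↦ ∫₀ᵗ e^{(u+v)/θ} c(u,v) du belongs to L¹([0,∞)); or (𝓛2'): g is continuous, lim_{s → +∞} ∫₀ˢ ∫₀ᵗ e^{(u+v)/θ} c(u,v) du dv = +∞ and lim_{s → +∞} s^{2−2H} g(s) = 0. Then lim_{s → +∞} s^{2−2H} Φ(s) = 0, i.e., the forcing contribution to the covariance is o(s^{2H−2}) as s → +∞. -/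
open MeasureTheory Real Filter Topology

lemma decay_aux (a b : ℝ) (hb : 0 < b) :
    Tendsto (fun s : ℝ => s ^ a * Real.exp (-(s / b))) atTop (𝓝 0) := by
  have h := tendsto_rpow_mul_exp_neg_mul_atTop_nhds_zero a (1/b) (by positivity)
  refine h.congr fun x => ?_
  rw [one_div, neg_mul, inv_mul_eq_div]

set_option maxHeartbeats 1000000 in
/-- under hypothesis 𝓛1 or 𝓛2', the forcing-term contribution to the
covariance is `o(s^{2H−2})` as `s → +∞`. -/
theorem forcing_cov_little_o
    (θ t H : ℝ) (hθ : 0 < θ) (ht : 0 < t) (hH : H ∈ Set.Ioo (0:ℝ) 1)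
    (c : ℝ → ℝ → ℝ) (hcmeas : Measurable (Function.uncurry c))
    (hcint : ∀ s > (0:ℝ),
      IntegrableOn (fun p : ℝ × ℝ => c p.1 p.2) (Set.Icc 0 t ×ˢ Set.Icc 0 s))
    (hyp :
      IntegrableOn
          (fun v => ∫ u in (0:ℝ)..t, Real.exp ((u+v)/θ) * c u v) (Set.Ici 0)
      ∨ (ContinuousOn (fun s => ∫ u in (0:ℝ)..t, Real.exp (u/θ) * c u s) (Set.Ici 0)
          ∧ Filter.Tendsto
              (fun s => ∫ v in (0:ℝ)..s, ∫ u in (0:ℝ)..t, Real.exp ((u+v)/θ) * c u v)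
              Filter.atTop Filter.atTop
          ∧ Filter.Tendsto
              (fun s => s ^ (2-2*H) * ∫ u in (0:ℝ)..t, Real.exp (u/θ) * c u s)
              Filter.atTop (nhds 0))) :
    Filter.Tendsto
      (fun s => s ^ (2-2*H) * (Real.exp (-(t+s)/θ) *
        ∫ v in (0:ℝ)..s, ∫ u in (0:ℝ)..t, Real.exp ((u+v)/θ) * c u v))
      Filter.atTop (nhds 0) := by
  set a : ℝ := 2 - 2*H with ha_def
  have ha : 0 < a := by have := hH.2; simp only [ha_def]; linarith
  set f : ℝ → ℝ := fun v => ∫ u in (0:ℝ)..t, Real.exp ((u+v)/θ) * c u v with hf_def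
  have hEsplit : ∀ s : ℝ, Real.exp (-(t+s)/θ) = Real.exp (-(t/θ)) * Real.exp (-(s/θ)) := by
    intro s
    rw [← Real.exp_add]
    congr 1
    field_simp
    ring
  rcases hyp with hL1 | ⟨hgc, _, hg0⟩
  · -- Case L1
    set C : ℝ := ∫ v in Set.Ici (0:ℝ), |f v| with hC_def
    have hFC : ∀ s : ℝ, 0 ≤ s → |∫ v in (0:ℝ)..s, f v| ≤ C := by
      intro s hs
      rw [intervalIntegral.integral_of_le hs]
      calc |∫ v in Set.Ioc (0:ℝ) s, f v| ≤ ∫ v in Set.Ioc (0:ℝ) s, |f v| := by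
            simpa [Real.norm_eq_abs] using
              norm_integral_le_integral_norm (μ := volume.restrict (Set.Ioc (0:ℝ) s)) f
        _ ≤ C := by
            refine setIntegral_mono_set hL1.abs ?_ ?_
            · exact Filter.Eventually.of_forall fun v => abs_nonneg _
            · exact HasSubset.Subset.eventuallyLE
                (fun x hx => le_of_lt hx.1 : Set.Ioc (0:ℝ) s ⊆ Set.Ici 0)
    rw [tendsto_zero_iff_abs_tendsto_zero]
    have hlim : Tendsto (fun s : ℝ =>
        C * Real.exp (-(t/θ)) * (s ^ a * Real.exp (-(s/θ)))) atTop (𝓝 0) := by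
      simpa using (decay_aux a θ hθ).const_mul (C * Real.exp (-(t/θ)))
    refine squeeze_zero' (Filter.Eventually.of_forall fun s => abs_nonneg _) ?_ hlim
    filter_upwards [eventually_ge_atTop (0:ℝ)] with s hs
    simp only [Function.comp_apply]
    have h1 : |s ^ a * (Real.exp (-(t+s)/θ) * ∫ v in (0:ℝ)..s, f v)|
        = s ^ a * Real.exp (-(t+s)/θ) * |∫ v in (0:ℝ)..s, f v| := by
      rw [abs_mul, abs_mul, abs_of_nonneg (Real.rpow_nonneg hs a),
        abs_of_nonneg (Real.exp_nonneg _), mul_assoc]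
    rw [h1, hEsplit s]
    have hnn : 0 ≤ s ^ a * (Real.exp (-(t/θ)) * Real.exp (-(s/θ))) := by positivity
    calc s ^ a * (Real.exp (-(t/θ)) * Real.exp (-(s/θ))) * |∫ v in (0:ℝ)..s, f v|
        ≤ s ^ a * (Real.exp (-(t/θ)) * Real.exp (-(s/θ))) * C :=
          mul_le_mul_of_nonneg_left (hFC s hs) hnn
      _ = C * Real.exp (-(t/θ)) * (s ^ a * Real.exp (-(s/θ))) := by ring
  · -- Case L2'
    set g : ℝ → ℝ := fun s => ∫ u in (0:ℝ)..t, Real.exp (u/θ) * c u s with hg_def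
    have hfg : ∀ v : ℝ, f v = Real.exp (v/θ) * g v := by
      intro v
      rw [hf_def, hg_def]
      simp only
      rw [← intervalIntegral.integral_const_mul]
      refine intervalIntegral.integral_congr fun u _ => ?_
      have h2 : (u+v)/θ = v/θ + u/θ := by ring
      rw [h2, Real.exp_add, mul_assoc]
    have hfc : ContinuousOn f (Set.Ici 0) := by
      have : ContinuousOn (fun v => Real.exp (v/θ) * g v) (Set.Ici 0) :=
        ((Real.continuous_exp.comp (continuous_id.div_const θ)).continuousOn).mul hgc
      exact this.congr fun v _ => hfg v
    have hint : ∀ p q : ℝ, 0 ≤ p → p ≤ q → IntervalIntegrable f volume p q := by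
      intro p q hp hpq
      apply ContinuousOn.intervalIntegrable
      apply hfc.mono
      rw [Set.uIcc_of_le hpq]
      exact fun x hx => le_trans hp hx.1
    rw [NormedAddCommGroup.tendsto_nhds_zero]
    intro ε hε
    have h2a : (0:ℝ) < (2:ℝ) ^ a := Real.rpow_pos_of_pos two_pos a
    set K : ℝ := θ * 2 ^ a + 1 with hK_def
    have hK : 0 < K := by positivity
    set ε' : ℝ := ε / (2 * K) with hε'_def
    have hε' : 0 < ε' := by positivity
    obtain ⟨M₀, hM₀⟩ := Filter.eventually_atTop.mp
      (NormedAddCommGroup.tendsto_nhds_zero.mp hg0 ε' hε')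
    set M : ℝ := max M₀ 1 with hM_def
    have hM1 : (1:ℝ) ≤ M := le_max_right _ _
    have hMpos : (0:ℝ) < M := lt_of_lt_of_le one_pos hM1
    have hgM : ∀ v : ℝ, M ≤ v → |g v| ≤ ε' * v ^ (-a) := by
      intro v hv
      have hvpos : 0 < v := lt_of_lt_of_le hMpos hv
      have h3 := hM₀ v (le_trans (le_max_left _ _) hv)
      rw [Real.norm_eq_abs, abs_mul, abs_of_nonneg (Real.rpow_nonneg hvpos.le a)] at h3
      have hva : 0 < v ^ a := Real.rpow_pos_of_pos hvpos a
      rw [Real.rpow_neg hvpos.le, ← div_eq_mul_inv, le_div_iff₀ hva]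
      calc |g v| * v ^ a = v ^ a * |g v| := mul_comm _ _
        _ ≤ ε' := h3.le
    set A : ℝ := |∫ v in (0:ℝ)..M, f v| with hA_def
    have hvan : Tendsto (fun s : ℝ =>
        A * Real.exp (-(t/θ)) * (s ^ a * Real.exp (-(s/θ)))
        + ε' * M ^ (-a) * Real.exp (-(t/θ)) * (s ^ (a+1) * Real.exp (-(s/(2*θ)))))
        atTop (𝓝 0) := by
      have h1 := (decay_aux a θ hθ).const_mul (A * Real.exp (-(t/θ)))
      have h2 := (decay_aux (a+1) (2*θ) (by positivity)).const_mul
        (ε' * M ^ (-a) * Real.exp (-(t/θ)))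
      simpa using h1.add h2
    have hvan2 := NormedAddCommGroup.tendsto_nhds_zero.mp hvan (ε/2) (by positivity)
    filter_upwards [hvan2, eventually_ge_atTop (2*M)] with s hsev hs2M
    -- basic positivity
    have hMs2 : M ≤ s/2 := by linarith
    have hs2pos : 0 < s/2 := lt_of_lt_of_le hMpos hMs2
    have hspos : 0 < s := by linarith
    have hMs : M ≤ s := by linarith
    -- split the integral
    have hsplit : (∫ v in (0:ℝ)..s, f v) = (∫ v in (0:ℝ)..M, f v) + ∫ v in M..s, f v :=
      (intervalIntegral.integral_add_adjacent_intervals (hint 0 M le_rfl hMpos.le)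
        (hint M s hMpos.le hMs)).symm
    -- pointwise bound on [M, s]
    have hptw : ∀ v ∈ Set.Icc M s, |f v| ≤
        ε' * (M ^ (-a) * Real.exp (s/(2*θ)) + (s/2) ^ (-a) * Real.exp (v/θ)) := by
      intro v hv
      have hvpos : 0 < v := lt_of_lt_of_le hMpos hv.1
      have habs : |f v| = Real.exp (v/θ) * |g v| := by
        rw [hfg v, abs_mul, abs_of_nonneg (Real.exp_nonneg _)]
      rw [habs]
      have hgv := hgM v hv.1
      have hexpnn : (0:ℝ) ≤ Real.exp (v/θ) := Real.exp_nonneg _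
      have h4 : Real.exp (v/θ) * |g v| ≤ Real.exp (v/θ) * (ε' * v ^ (-a)) :=
        mul_le_mul_of_nonneg_left hgv hexpnn
      refine h4.trans ?_
      have hvnn : (0:ℝ) ≤ v ^ (-a) := Real.rpow_nonneg hvpos.le _
      rcases le_or_gt v (s/2) with hcase | hcase
      · have he : Real.exp (v/θ) ≤ Real.exp (s/(2*θ)) := by
          apply Real.exp_le_exp.mpr
          rw [div_le_div_iff₀ hθ (by positivity)]
          nlinarith
        have hr : v ^ (-a) ≤ M ^ (-a) :=
          Real.rpow_le_rpow_of_nonpos hMpos hv.1 (by linarith)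
        have key : Real.exp (v/θ) * v ^ (-a) ≤ Real.exp (s/(2*θ)) * M ^ (-a) :=
          mul_le_mul he hr hvnn (Real.exp_nonneg _)
        have hnn1 : (0:ℝ) ≤ (s/2) ^ (-a) * Real.exp (v/θ) := by positivity
        calc Real.exp (v/θ) * (ε' * v ^ (-a)) = ε' * (Real.exp (v/θ) * v ^ (-a)) := by ring
          _ ≤ ε' * (Real.exp (s/(2*θ)) * M ^ (-a)) := mul_le_mul_of_nonneg_left key hε'.le
          _ ≤ ε' * (M ^ (-a) * Real.exp (s/(2*θ)) + (s/2) ^ (-a) * Real.exp (v/θ)) := by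
              apply mul_le_mul_of_nonneg_left _ hε'.le
              rw [mul_comm (Real.exp (s/(2*θ)))]
              exact le_add_of_nonneg_right hnn1
      · have hr : v ^ (-a) ≤ (s/2) ^ (-a) :=
          Real.rpow_le_rpow_of_nonpos hs2pos hcase.le (by linarith)
        have hnn1 : (0:ℝ) ≤ M ^ (-a) * Real.exp (s/(2*θ)) := by positivity
        calc Real.exp (v/θ) * (ε' * v ^ (-a)) = ε' * (Real.exp (v/θ) * v ^ (-a)) := by ring
          _ ≤ ε' * (Real.exp (v/θ) * (s/2) ^ (-a)) :=
              mul_le_mul_of_nonneg_left (mul_le_mul_of_nonneg_left hr hexpnn) hε'.le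
          _ ≤ ε' * (M ^ (-a) * Real.exp (s/(2*θ)) + (s/2) ^ (-a) * Real.exp (v/θ)) := by
              apply mul_le_mul_of_nonneg_left _ hε'.le
              rw [mul_comm (Real.exp (v/θ))]
              exact le_add_of_nonneg_left hnn1
    -- integral bound on [M, s]
    have hbound : |∫ v in M..s, f v| ≤
        ε' * ((s - M) * (M ^ (-a) * Real.exp (s/(2*θ)))
          + (s/2) ^ (-a) * (θ * (Real.exp (s/θ) - Real.exp (M/θ)))) := by
      calc |∫ v in M..s, f v| ≤ ∫ v in M..s, |f v| :=
            intervalIntegral.abs_integral_le_integral_abs hMs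
        _ ≤ ∫ v in M..s,
              ε' * (M ^ (-a) * Real.exp (s/(2*θ)) + (s/2) ^ (-a) * Real.exp (v/θ)) := by
            refine intervalIntegral.integral_mono_on hMs ((hint M s hMpos.le hMs).abs) ?_ hptw
            apply Continuous.intervalIntegrable
            fun_prop
        _ = ε' * ((s - M) * (M ^ (-a) * Real.exp (s/(2*θ)))
              + (s/2) ^ (-a) * (θ * (Real.exp (s/θ) - Real.exp (M/θ)))) := by
            rw [intervalIntegral.integral_const_mul]
            congr 1
            rw [intervalIntegral.integral_add]
            · rw [intervalIntegral.integral_const, intervalIntegral.integral_const_mul]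
              have hexpint : (∫ v in M..s, Real.exp (v/θ))
                  = θ * (Real.exp (s/θ) - Real.exp (M/θ)) := by
                have := intervalIntegral.integral_comp_div (a := M) (b := s) (c := θ)
                  (f := Real.exp) (ne_of_gt hθ)
                rw [this, integral_exp, smul_eq_mul]
              rw [hexpint, smul_eq_mul]
            · exact intervalIntegrable_const
            · apply Continuous.intervalIntegrable; fun_prop
    -- final arithmetic
    have hEs := hEsplit s
    have hnorm : ‖s ^ a * (Real.exp (-(t+s)/θ) * ∫ v in (0:ℝ)..s, f v)‖
        = s ^ a * Real.exp (-(t+s)/θ) * |∫ v in (0:ℝ)..s, f v| := by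
      rw [Real.norm_eq_abs, abs_mul, abs_mul, abs_of_nonneg (Real.rpow_nonneg hspos.le a),
        abs_of_nonneg (Real.exp_nonneg _), mul_assoc]
    rw [hnorm]
    have hFabs : |∫ v in (0:ℝ)..s, f v| ≤ A
        + ε' * ((s - M) * (M ^ (-a) * Real.exp (s/(2*θ)))
          + (s/2) ^ (-a) * (θ * (Real.exp (s/θ) - Real.exp (M/θ)))) := by
      rw [hsplit]
      exact (abs_add_le _ _).trans (by exact add_le_add_right hbound A)
    -- key rewriting identities
    have hexpid : Real.exp (-(s/θ)) * Real.exp (s/(2*θ)) = Real.exp (-(s/(2*θ))) := by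
      rw [← Real.exp_add]; congr 1; field_simp; ring
    have hid1 : s ^ a * Real.exp (-(t+s)/θ) * (s * (M ^ (-a) * Real.exp (s/(2*θ))))
        = M ^ (-a) * Real.exp (-(t/θ)) * (s ^ (a+1) * Real.exp (-(s/(2*θ)))) := by
      rw [hEs, Real.rpow_add_one (ne_of_gt hspos), ← hexpid]
      ring
    have h5' : (s/2 : ℝ) ^ (-a) = 2 ^ a * s ^ (-a) := by
      rw [Real.div_rpow hspos.le (by norm_num), Real.rpow_neg (by norm_num : (0:ℝ) ≤ 2),
        div_eq_mul_inv, inv_inv, mul_comm]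
    have h6 : s ^ a * s ^ (-a) = 1 := by
      rw [← Real.rpow_add hspos]; simp
    have h7 : Real.exp (-(s/θ)) * Real.exp (s/θ) = 1 := by
      rw [← Real.exp_add]; simp
    have hid2 : s ^ a * Real.exp (-(t+s)/θ) * ((s/2) ^ (-a) * (θ * Real.exp (s/θ)))
        = θ * 2 ^ a * Real.exp (-(t/θ)) := by
      rw [hEs, h5']
      calc s ^ a * (Real.exp (-(t/θ)) * Real.exp (-(s/θ)))
            * (2 ^ a * s ^ (-a) * (θ * Real.exp (s/θ)))
          = (s ^ a * s ^ (-a)) * (Real.exp (-(s/θ)) * Real.exp (s/θ))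
            * (θ * 2 ^ a * Real.exp (-(t/θ))) := by ring
        _ = θ * 2 ^ a * Real.exp (-(t/θ)) := by rw [h6, h7]; ring
    have hPnn : (0:ℝ) ≤ s ^ a * Real.exp (-(t+s)/θ) := by positivity
    have heq : s ^ a * Real.exp (-(t+s)/θ)
          * (A + ε' * (s * (M ^ (-a) * Real.exp (s/(2*θ)))
            + (s/2) ^ (-a) * (θ * Real.exp (s/θ))))
        = (A * Real.exp (-(t/θ)) * (s ^ a * Real.exp (-(s/θ)))
            + ε' * M ^ (-a) * Real.exp (-(t/θ)) * (s ^ (a+1) * Real.exp (-(s/(2*θ)))))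
          + ε' * (θ * 2 ^ a * Real.exp (-(t/θ))) := by
      linear_combination (A * s ^ a) * hEs + ε' * hid1 + ε' * hid2
    have hV : A * Real.exp (-(t/θ)) * (s ^ a * Real.exp (-(s/θ)))
        + ε' * M ^ (-a) * Real.exp (-(t/θ)) * (s ^ (a+1) * Real.exp (-(s/(2*θ)))) < ε/2 :=
      lt_of_le_of_lt (le_abs_self _) (by simpa [Real.norm_eq_abs] using hsev)
    have hEt1 : Real.exp (-(t/θ)) ≤ 1 := by
      rw [Real.exp_le_one_iff]
      have : 0 ≤ t/θ := by positivity
      linarith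
    have hconst : ε' * (θ * 2 ^ a * Real.exp (-(t/θ))) ≤ ε/2 := by
      have hKe : ε' * K = ε/2 := by
        rw [hε'_def]; field_simp
      have h10 : ε' * (θ * 2 ^ a * Real.exp (-(t/θ))) ≤ ε' * (θ * 2 ^ a) := by
        calc ε' * (θ * 2 ^ a * Real.exp (-(t/θ)))
            = ε' * (θ * 2 ^ a) * Real.exp (-(t/θ)) := by ring
          _ ≤ ε' * (θ * 2 ^ a) * 1 :=
              mul_le_mul_of_nonneg_left hEt1 (by positivity : (0:ℝ) ≤ ε' * (θ * 2 ^ a))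
          _ = ε' * (θ * 2 ^ a) := mul_one _
      have h11 : ε' * (θ * 2 ^ a) ≤ ε' * K := by
        apply mul_le_mul_of_nonneg_left _ hε'.le
        rw [hK_def]; linarith
      linarith
    calc s ^ a * Real.exp (-(t+s)/θ) * |∫ v in (0:ℝ)..s, f v|
        ≤ s ^ a * Real.exp (-(t+s)/θ)
          * (A + ε' * ((s - M) * (M ^ (-a) * Real.exp (s/(2*θ)))
            + (s/2) ^ (-a) * (θ * (Real.exp (s/θ) - Real.exp (M/θ))))) :=
          mul_le_mul_of_nonneg_left hFabs hPnn
      _ ≤ s ^ a * Real.exp (-(t+s)/θ)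
          * (A + ε' * (s * (M ^ (-a) * Real.exp (s/(2*θ)))
            + (s/2) ^ (-a) * (θ * Real.exp (s/θ)))) := by
          apply mul_le_mul_of_nonneg_left _ hPnn
          have hx1 : (s - M) * (M ^ (-a) * Real.exp (s/(2*θ)))
              ≤ s * (M ^ (-a) * Real.exp (s/(2*θ))) := by
            apply mul_le_mul_of_nonneg_right (by linarith) (by positivity)
          have hx2 : (s/2) ^ (-a) * (θ * (Real.exp (s/θ) - Real.exp (M/θ)))
              ≤ (s/2) ^ (-a) * (θ * Real.exp (s/θ)) := by
            apply mul_le_mul_of_nonneg_left _ (by positivity)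
            nlinarith [Real.exp_pos (M/θ)]
          have h12 := mul_le_mul_of_nonneg_left (add_le_add hx1 hx2) hε'.le
          linarith
      _ = _ := heq
      _ < ε := by linarith
end
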